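/- Let θ > 1 and let Γ : {(s,t) : 0 ≤ s ≤ t ≤ T} → ℝ^e and a superadditive control ω (i.e., ω continuous, ω(s,s)=0, ω(s,u)+ω(u,t) ≤ ω(s,t) for s ≤ u ≤ t) satisfy ‖Γ_{s,u} + Γ_{u,t} − Γ_{s,t}‖ ≤ C ω(s,t)^θ for all s ≤ u ≤ t. Suppose Y : [0,T] → ℝ^e satisfies Y_t − Y_s = lim_{|D|→0} ∑_{t_i ∈ D} Γ_{t_i, t_{i+1}} over partitions D of [s,t]. Then for all s ≤ t, ‖Y_t − Y_s − Γ_{s,t}‖ ≤ C (1 + ∑_{n≥2} (2/n)^θ) ω(s,t)^θ. -/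

import Mathlib

open Finset

private lemma stepMono (τ : ℕ → ℝ) (n : ℕ) (h : ∀ i < n, τ i ≤ τ (i+1)) :
    ∀ i j, i ≤ j → j ≤ n → τ i ≤ τ j := by
  intro i j hij hjn
  induction j with
  | zero => exact Nat.le_zero.mp hij ▸ le_refl _
  | succ k ih =>
    rcases Nat.eq_or_lt_of_le hij with h1 | h1
    · exact h1 ▸ le_refl _
    · exact le_trans (ih (Nat.lt_succ_iff.mp h1) (le_trans (Nat.le_succ k) hjn))
        (h k (Nat.lt_of_lt_of_le (Nat.lt_succ_self k) hjn))

private lemma twoStep {T : ℝ} {ω : ℝ → ℝ → ℝ}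
    (hω0 : ∀ s t : ℝ, 0 ≤ s → s ≤ t → t ≤ T → 0 ≤ ω s t)
    (hsuper : ∀ s u t : ℝ, 0 ≤ s → s ≤ u → u ≤ t → t ≤ T → ω s u + ω u t ≤ ω s t)
    (τ : ℕ → ℝ) (n : ℕ) (h0 : 0 ≤ τ 0) (hT : τ n ≤ T)
    (hmono : ∀ i < n, τ i ≤ τ (i+1)) :
    ∀ m, m + 1 ≤ n → ∑ i ∈ range m, ω (τ i) (τ (i+2)) ≤ ω (τ 0) (τ (m+1)) + ω (τ 0) (τ m) := by
  have hm := stepMono τ n hmono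
  have hTi : ∀ i, i ≤ n → τ i ≤ T := fun i hi => le_trans (hm i n hi le_rfl) hT
  have h0i : ∀ i, i ≤ n → 0 ≤ τ i := fun i hi => le_trans h0 (hm 0 i (Nat.zero_le i) hi)
  intro m
  induction m with
  | zero =>
    intro h1
    simp only [range_zero, sum_empty]
    have := hω0 (τ 0) (τ 1) h0 (hm 0 1 (by omega) h1) (hTi 1 h1)
    have := hω0 (τ 0) (τ 0) h0 le_rfl (hTi 0 (by omega))
    linarith
  | succ m ih =>
    intro h1
    have ih' := ih (by omega)
    rw [sum_range_succ]
    have hs := hsuper (τ 0) (τ m) (τ (m+2)) h0 (hm 0 m (by omega) (by omega))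
      (hm m (m+2) (by omega) (by omega)) (hTi (m+2) (by omega))
    linarith

private lemma keyEst {e : ℕ} {T θ : ℝ} (hθ : 1 < θ)
    (Γ : ℝ → ℝ → EuclideanSpace ℝ (Fin e)) (ω : ℝ → ℝ → ℝ) (C : ℝ) (hC : 0 ≤ C)
    (hω0 : ∀ s t : ℝ, 0 ≤ s → s ≤ t → t ≤ T → 0 ≤ ω s t)
    (hsuper : ∀ s u t : ℝ, 0 ≤ s → s ≤ u → u ≤ t → t ≤ T → ω s u + ω u t ≤ ω s t)
    (halmost : ∀ s u t : ℝ, 0 ≤ s → s ≤ u → u ≤ t → t ≤ T →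
      ‖Γ s u + Γ u t - Γ s t‖ ≤ C * ω s t ^ θ) :
    ∀ m : ℕ, ∀ τ : ℕ → ℝ, 0 ≤ τ 0 → τ (m+2) ≤ T → (∀ i < m+2, τ i ≤ τ (i+1)) →
      ‖(∑ i ∈ range (m+2), Γ (τ i) (τ (i+1))) - Γ (τ 0) (τ (m+2))‖ ≤
        C * (1 + ∑ k ∈ range m, ((2:ℝ)/(k+2)) ^ θ) * ω (τ 0) (τ (m+2)) ^ θ := by
  intro m
  induction m with
  | zero =>
    intro τ h0 hT hmono
    simp only [range_zero, sum_empty, add_zero, mul_one]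
    rw [show (0:ℕ)+2 = 2 from rfl, sum_range_succ, sum_range_succ, sum_range_zero, zero_add]
    exact halmost (τ 0) (τ 1) (τ 2) h0 (hmono 0 (by omega)) (hmono 1 (by omega)) hT
  | succ m ih =>
    intro τ h0 hT hmono
    have hm := stepMono τ (m+3) hmono
    have hTi : ∀ i, i ≤ m+3 → τ i ≤ T := fun i hi => le_trans (hm i (m+3) hi le_rfl) hT
    have h0i : ∀ i, i ≤ m+3 → 0 ≤ τ i := fun i hi => le_trans h0 (hm 0 i (Nat.zero_le i) hi)
    have hωnn : 0 ≤ ω (τ 0) (τ (m+3)) := hω0 _ _ h0 (hm 0 (m+3) (by omega) le_rfl) hT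
    -- pigeonhole
    have hsum : ∑ i ∈ range (m+2), ω (τ i) (τ (i+2)) ≤ 2 * ω (τ 0) (τ (m+3)) := by
      have h2 := twoStep hω0 hsuper τ (m+3) h0 hT hmono (m+2) (by omega)
      have h3 : ω (τ 0) (τ (m+2)) ≤ ω (τ 0) (τ (m+3)) := by
        have := hsuper (τ 0) (τ (m+2)) (τ (m+3)) h0 (hm 0 (m+2) (by omega) (by omega))
          (hmono (m+2) (by omega)) hT
        have := hω0 (τ (m+2)) (τ (m+3)) (h0i (m+2) (by omega)) (hmono (m+2) (by omega)) hT
        linarith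
      linarith
    obtain ⟨i, hi, hωi⟩ : ∃ i ∈ range (m+2),
        ω (τ i) (τ (i+2)) ≤ 2 * ω (τ 0) (τ (m+3)) / (m+2) := by
      apply Finset.exists_le_of_sum_le ⟨0, by simp⟩
      rw [Finset.sum_const, card_range, nsmul_eq_mul]
      push_cast
      rw [mul_div_assoc', mul_div_cancel_left₀ _ (by positivity : ((m:ℝ)+2) ≠ 0)]
      exact hsum
    simp only [mem_range] at hi
    set τ' : ℕ → ℝ := fun j => if j ≤ i then τ j else τ (j+1) with hτ'
    have hτ'0 : τ' 0 = τ 0 := if_pos (Nat.zero_le i)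
    have hτ'last : τ' (m+2) = τ (m+3) := by
      simp only [hτ', if_neg (by omega : ¬ (m+2 ≤ i))]
    have hτ'mono : ∀ j < m+2, τ' j ≤ τ' (j+1) := by
      intro j hj
      by_cases h1 : j ≤ i
      · by_cases h2 : j + 1 ≤ i
        · simp only [hτ', if_pos h1, if_pos h2]; exact hmono j (by omega)
        · simp only [hτ', if_pos h1, if_neg h2]
          exact le_trans (hm j (j+1) (by omega) (by omega)) (hm (j+1) (j+2) (by omega) (by omega))
      · simp only [hτ', if_neg h1, if_neg (by omega : ¬ (j+1 ≤ i))]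
        exact hmono (j+1) (by omega)
    have hIH := ih τ' (hτ'0 ▸ h0) (hτ'last ▸ hT) hτ'mono
    rw [hτ'0, hτ'last] at hIH
    have hid : ∑ j ∈ range (m+2), Γ (τ' j) (τ' (j+1))
        = (∑ j ∈ range (m+3), Γ (τ j) (τ (j+1)))
          - Γ (τ i) (τ (i+1)) - Γ (τ (i+1)) (τ (i+2)) + Γ (τ i) (τ (i+2)) := by
      have e1 : ∑ j ∈ range (m+2), Γ (τ' j) (τ' (j+1))
          = (∑ j ∈ range i, Γ (τ j) (τ (j+1)) + Γ (τ i) (τ (i+2)))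
            + ∑ j ∈ Ico (i+1) (m+2), Γ (τ (j+1)) (τ (j+2)) := by
        rw [range_eq_Ico, ← Finset.sum_Ico_consecutive _ (Nat.zero_le i) (by omega : i ≤ m+2),
          Finset.sum_eq_sum_Ico_succ_bot (by omega : i < m+2)]
        rw [← range_eq_Ico, ← add_assoc]
        congr 1
        · congr 1
          · exact Finset.sum_congr rfl (fun j hj => by
              simp only [mem_range] at hj
              simp only [hτ', if_pos (by omega : j ≤ i), if_pos (by omega : j+1 ≤ i)])
          · simp only [hτ', if_pos le_rfl, if_neg (by omega : ¬ (i+1 ≤ i))]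
        · exact Finset.sum_congr rfl (fun j hj => by
            simp only [mem_Ico] at hj
            simp only [hτ', if_neg (by omega : ¬ (j ≤ i)), if_neg (by omega : ¬ (j+1 ≤ i))])
      have e2 : ∑ j ∈ range (m+3), Γ (τ j) (τ (j+1))
          = ∑ j ∈ range i, Γ (τ j) (τ (j+1)) + (Γ (τ i) (τ (i+1)) + (Γ (τ (i+1)) (τ (i+2))
            + ∑ j ∈ Ico (i+2) (m+3), Γ (τ j) (τ (j+1)))) := by
        rw [range_eq_Ico, ← Finset.sum_Ico_consecutive _ (Nat.zero_le i) (by omega : i ≤ m+3),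
          Finset.sum_eq_sum_Ico_succ_bot (by omega : i < m+3),
          Finset.sum_eq_sum_Ico_succ_bot (by omega : i+1 < m+3), ← range_eq_Ico]
      have e3 : ∑ j ∈ Ico (i+1) (m+2), Γ (τ (j+1)) (τ (j+2))
          = ∑ j ∈ Ico (i+2) (m+3), Γ (τ j) (τ (j+1)) := by
        rw [Finset.sum_Ico_eq_sum_range, Finset.sum_Ico_eq_sum_range]
        rw [show m+2-(i+1) = m+3-(i+2) from by omega]
        exact Finset.sum_congr rfl (fun k _ => by
          rw [show i+1+k+1 = i+2+k from by omega, show i+1+k+2 = i+2+k+1 from by omega])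
      rw [e1, e2, e3]; abel
    have hdrop : ‖Γ (τ i) (τ (i+1)) + Γ (τ (i+1)) (τ (i+2)) - Γ (τ i) (τ (i+2))‖
        ≤ C * ((2:ℝ)/(m+2)) ^ θ * ω (τ 0) (τ (m+3)) ^ θ := by
      have h1 := halmost (τ i) (τ (i+1)) (τ (i+2)) (h0i i (by omega)) (hmono i (by omega))
        (hmono (i+1) (by omega)) (hTi (i+2) (by omega))
      have h2 : ω (τ i) (τ (i+2)) ^ θ ≤ ((2:ℝ)/((m:ℝ)+2)) ^ θ * ω (τ 0) (τ (m+3)) ^ θ := by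
        rw [← Real.mul_rpow (by positivity) hωnn]
        apply Real.rpow_le_rpow (hω0 _ _ (h0i i (by omega)) (hm i (i+2) (by omega) (by omega))
          (hTi (i+2) (by omega)))
        · calc ω (τ i) (τ (i+2)) ≤ 2 * ω (τ 0) (τ (m+3)) / ((m:ℝ)+2) := by
                convert hωi using 2 <;> push_cast <;> ring
            _ = 2/((m:ℝ)+2) * ω (τ 0) (τ (m+3)) := by ring
        · linarith
      calc ‖Γ (τ i) (τ (i+1)) + Γ (τ (i+1)) (τ (i+2)) - Γ (τ i) (τ (i+2))‖
          ≤ C * ω (τ i) (τ (i+2)) ^ θ := h1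
        _ ≤ C * (((2:ℝ)/((m:ℝ)+2)) ^ θ * ω (τ 0) (τ (m+3)) ^ θ) :=
            mul_le_mul_of_nonneg_left h2 hC
        _ = C * ((2:ℝ)/((m:ℝ)+2)) ^ θ * ω (τ 0) (τ (m+3)) ^ θ := by ring
    have hsplit : (∑ j ∈ range (m+3), Γ (τ j) (τ (j+1))) - Γ (τ 0) (τ (m+3))
        = ((∑ j ∈ range (m+2), Γ (τ' j) (τ' (j+1))) - Γ (τ 0) (τ (m+3)))
          + (Γ (τ i) (τ (i+1)) + Γ (τ (i+1)) (τ (i+2)) - Γ (τ i) (τ (i+2))) := by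
      rw [hid]; abel
    show ‖(∑ j ∈ range (m+3), Γ (τ j) (τ (j+1))) - Γ (τ 0) (τ (m+3))‖
        ≤ C * (1 + ∑ k ∈ range (m+1), ((2:ℝ)/((k:ℝ)+2)) ^ θ) * ω (τ 0) (τ (m+3)) ^ θ
    rw [hsplit]
    calc ‖((∑ j ∈ range (m+2), Γ (τ' j) (τ' (j+1))) - Γ (τ 0) (τ (m+3)))
          + (Γ (τ i) (τ (i+1)) + Γ (τ (i+1)) (τ (i+2)) - Γ (τ i) (τ (i+2)))‖
        ≤ ‖(∑ j ∈ range (m+2), Γ (τ' j) (τ' (j+1))) - Γ (τ 0) (τ (m+3))‖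
          + ‖Γ (τ i) (τ (i+1)) + Γ (τ (i+1)) (τ (i+2)) - Γ (τ i) (τ (i+2))‖ := norm_add_le _ _
      _ ≤ C * (1 + ∑ k ∈ range m, ((2:ℝ)/((k:ℝ)+2)) ^ θ) * ω (τ 0) (τ (m+3)) ^ θ
          + C * ((2:ℝ)/((m:ℝ)+2)) ^ θ * ω (τ 0) (τ (m+3)) ^ θ := add_le_add hIH hdrop
      _ = C * (1 + (∑ k ∈ range m, ((2:ℝ)/((k:ℝ)+2)) ^ θ + ((2:ℝ)/((m:ℝ)+2)) ^ θ))
            * ω (τ 0) (τ (m+3)) ^ θ := by ring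
      _ = C * (1 + ∑ k ∈ range (m+1), ((2:ℝ)/((k:ℝ)+2)) ^ θ) * ω (τ 0) (τ (m+3)) ^ θ := by
            rw [sum_range_succ]

private lemma sumConv {θ : ℝ} (hθ : 1 < θ) : Summable (fun k : ℕ => ((2:ℝ)/((k:ℝ)+2)) ^ θ) := by
  have h1 : Summable (fun n : ℕ => 1 / (n:ℝ) ^ θ) := Real.summable_one_div_nat_rpow.mpr hθ
  have h2 : Summable (fun k : ℕ => 1 / ((↑(k+2)):ℝ) ^ θ) :=
    h1.comp_injective (add_left_injective 2)
  have h3 := h2.mul_left ((2:ℝ)^θ)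
  apply h3.congr
  intro k
  rw [Real.div_rpow (by norm_num) (by positivity)]
  push_cast
  ring



/-- the "successive dropping of points" (sewing) estimate. If
‖Γ_{s,u} + Γ_{u,t} − Γ_{s,t}‖ ≤ C ω(s,t)^θ for a superadditive continuous control ω
with θ > 1, and Y_t − Y_s is the limit of ∑ Γ_{t_i,t_{i+1}} along partitions of [s,t]
with mesh tending to 0, then ‖Y_t − Y_s − Γ_{s,t}‖ ≤ C (1 + ∑_{n≥2} (2/n)^θ) ω(s,t)^θ. -/
theorem stmt9 {e : ℕ} (T : ℝ) (hT : 0 ≤ T) (θ : ℝ) (hθ : 1 < θ)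
    (Γ : ℝ → ℝ → EuclideanSpace ℝ (Fin e)) (ω : ℝ → ℝ → ℝ) (C : ℝ) (hC : 0 ≤ C)
    (hω0 : ∀ s t : ℝ, 0 ≤ s → s ≤ t → t ≤ T → 0 ≤ ω s t)
    (hωdiag : ∀ s : ℝ, 0 ≤ s → s ≤ T → ω s s = 0)
    (hsuper : ∀ s u t : ℝ, 0 ≤ s → s ≤ u → u ≤ t → t ≤ T → ω s u + ω u t ≤ ω s t)
    (hcont : ContinuousOn (fun q : ℝ × ℝ => ω q.1 q.2)
      {q : ℝ × ℝ | 0 ≤ q.1 ∧ q.1 ≤ q.2 ∧ q.2 ≤ T})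
    (halmost : ∀ s u t : ℝ, 0 ≤ s → s ≤ u → u ≤ t → t ≤ T →
      ‖Γ s u + Γ u t - Γ s t‖ ≤ C * ω s t ^ θ)
    (Y : ℝ → EuclideanSpace ℝ (Fin e))
    (hY : ∀ s t : ℝ, 0 ≤ s → s ≤ t → t ≤ T → ∀ ε > (0 : ℝ), ∃ δ > (0 : ℝ),
      ∀ (n : ℕ) (τ : ℕ → ℝ), 0 < n → τ 0 = s → τ n = t →
        (∀ i < n, τ i ≤ τ (i + 1)) → (∀ i < n, τ (i + 1) - τ i < δ) →
        ‖(∑ i ∈ Finset.range n, Γ (τ i) (τ (i + 1))) - (Y t - Y s)‖ < ε) :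
    ∀ s t : ℝ, 0 ≤ s → s ≤ t → t ≤ T →
      ‖Y t - Y s - Γ s t‖ ≤
        C * (1 + ∑' n : ℕ, ((2 : ℝ) / (n + 2)) ^ θ) * ω s t ^ θ := by
  intro s t hs hst htT
  have hωst : 0 ≤ ω s t := hω0 s t hs hst htT
  have hsummable := sumConv hθ
  apply le_of_forall_pos_le_add
  intro ε hε
  obtain ⟨δ, hδ, hδ2⟩ := hY s t hs hst htT ε hε
  obtain ⟨n₀, hn₀⟩ := exists_nat_gt ((t - s)/δ)
  set n : ℕ := n₀ + 2 with hn
  have hnpos : (0:ℝ) < n := by positivity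
  set q : ℝ := (t - s)/n with hq
  have hq0 : 0 ≤ q := by
    apply div_nonneg (by linarith) (le_of_lt hnpos)
  set τ : ℕ → ℝ := fun i => s + i * q with hτ
  have hτ0 : τ 0 = s := by simp [hτ]
  have hτn : τ n = t := by
    simp only [hτ, hq]
    field_simp
    ring
  have hτstep : ∀ i : ℕ, τ (i+1) - τ i = q := by
    intro i
    simp only [hτ]
    push_cast
    ring
  have hmono : ∀ i < n, τ i ≤ τ (i+1) := by
    intro i _
    have := hτstep i
    linarith
  have hmesh : ∀ i < n, τ (i+1) - τ i < δ := by
    intro i _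
    rw [hτstep i, hq]
    rw [div_lt_iff₀ hnpos]
    have h1 : (t - s)/δ < (n:ℝ) := by
      calc (t-s)/δ < (n₀:ℝ) := hn₀
        _ ≤ n := by push_cast [hn]; linarith
    calc t - s < δ * n := by
          rw [mul_comm]
          exact (div_lt_iff₀ hδ).mp h1
      _ = δ * n := rfl
  have h1 := hδ2 n τ (by omega) hτ0 hτn hmono hmesh
  have h2 := keyEst hθ Γ ω C hC hω0 hsuper halmost n₀ τ (by rw [hτ0]; exact hs)
    (by rw [show n₀ + 2 = n from rfl, hτn]; exact htT) (by rw [show n₀ + 2 = n from rfl]; exact hmono)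
  rw [show n₀ + 2 = n from rfl, hτ0, hτn] at h2
  have h3 : ∑ k ∈ Finset.range n₀, ((2:ℝ)/((k:ℝ)+2)) ^ θ ≤ ∑' k : ℕ, ((2:ℝ)/((k:ℝ)+2)) ^ θ :=
    Summable.sum_le_tsum _ (fun k _ => Real.rpow_nonneg (by positivity) θ) hsummable
  have h4 : C * (1 + ∑ k ∈ Finset.range n₀, ((2:ℝ)/((k:ℝ)+2)) ^ θ) * ω s t ^ θ
      ≤ C * (1 + ∑' k : ℕ, ((2:ℝ)/((k:ℝ)+2)) ^ θ) * ω s t ^ θ := by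
    have hω' : 0 ≤ ω s t ^ θ := Real.rpow_nonneg hωst θ
    have := mul_le_mul_of_nonneg_left (add_le_add (le_refl (1:ℝ)) h3) hC
    exact mul_le_mul_of_nonneg_right this hω'
  have hkey : Y t - Y s - Γ s t
      = ((∑ i ∈ Finset.range n, Γ (τ i) (τ (i+1))) - Γ s t)
        - ((∑ i ∈ Finset.range n, Γ (τ i) (τ (i+1))) - (Y t - Y s)) := by abel
  rw [hkey]
  calc ‖_ - _‖ ≤ ‖(∑ i ∈ Finset.range n, Γ (τ i) (τ (i+1))) - Γ s t‖
        + ‖(∑ i ∈ Finset.range n, Γ (τ i) (τ (i+1))) - (Y t - Y s)‖ := norm_sub_le _ _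
    _ ≤ C * (1 + ∑' k : ℕ, ((2:ℝ)/((k:ℝ)+2)) ^ θ) * ω s t ^ θ + ε := by
        have := le_trans h2 h4
        linarith [le_of_lt h1]
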